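/- arXiv:0707.3794 — 2 statements merged into one kernel-verified Lean document; each statement's English description precedes it below -/
import Mathlib

section
/- Let G = (V,E) be a finite bi-directed graph and let p be a binary distribution on V. Then p satisfies the global Markov property for G if and only if p satisfies the connected set Markov property for G. -/
open Finset

namespace BMMI

variable {V : Type*} [Fintype V] [DecidableEq V]

/-- `Pr p A a` is the probability of the event `X_A = a|_A` under `p`. -/
def Pr (p : (V → Bool) → ℝ) (A : Finset V) (a : V → Bool) : ℝ :=
  ∑ i ∈ Finset.univ.filter (fun i : V → Bool => ∀ v ∈ A, i v = a v), p i

/-- `p` is a binary distribution on `V`. -/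
def IsDist (p : (V → Bool) → ℝ) : Prop :=
  (∀ i, 0 ≤ p i) ∧ ∑ i : V → Bool, p i = 1

/-- `Pr2 p S T a b` is the probability of the joint event `X_S = a|_S, X_T = b|_T`. -/
def Pr2 (p : (V → Bool) → ℝ) (S T : Finset V) (a b : V → Bool) : ℝ :=
  ∑ i ∈ Finset.univ.filter
      (fun i : V → Bool => (∀ v ∈ S, i v = a v) ∧ (∀ v ∈ T, i v = b v)), p i

/-- `X_S` and `X_T` are independent under `p`. -/
def Indep (p : (V → Bool) → ℝ) (S T : Finset V) : Prop :=
  ∀ a b : V → Bool, Pr2 p S T a b = Pr p S a * Pr p T b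

/-- `spo G A` consists of `A` together with all vertices adjacent to a vertex of `A`. -/
def spo (G : SimpleGraph V) [DecidableRel G.Adj] (A : Finset V) : Finset V :=
  Finset.univ.filter (fun w => w ∈ A ∨ ∃ v ∈ A, G.Adj v w)

/-- `C` is connected in `G`: every pair of vertices of `C` is joined by a walk
all of whose vertices lie in `C`. -/
def Conn (G : SimpleGraph V) (C : Finset V) : Prop :=
  ∀ v ∈ C, ∀ w ∈ C, ∃ W : G.Walk v w, ∀ x ∈ W.support, x ∈ C

/-- The connected set Markov property for the bi-directed graph `G`. -/
def CSMP (G : SimpleGraph V) [DecidableRel G.Adj] (p : (V → Bool) → ℝ) : Prop :=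
  ∀ C : Finset V, C.Nonempty → Conn G C → Indep p C (Finset.univ \ spo G C)

/-- `C` is an inclusion-maximal connected subset of `D` (a connected component of the
induced subgraph on `D`). -/
def IsMaxConnComp (G : SimpleGraph V) (D C : Finset V) : Prop :=
  C ⊆ D ∧ C.Nonempty ∧ Conn G C ∧
    ∀ C' : Finset V, C ⊆ C' → C' ⊆ D → Conn G C' → C' = C

/-- The Möbius parameter `q_A(p) = P(X_A = 0)`. -/
def qM (p : (V → Bool) → ℝ) (A : Finset V) : ℝ := Pr p A (fun _ => false)

/-- `Pr3 p A B C a b c` is the probability of the joint event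
`X_A = a|_A, X_B = b|_B, X_C = c|_C`. -/
def Pr3 (p : (V → Bool) → ℝ) (A B C : Finset V) (a b c : V → Bool) : ℝ :=
  ∑ i ∈ Finset.univ.filter
      (fun i : V → Bool =>
        (∀ v ∈ A, i v = a v) ∧ (∀ v ∈ B, i v = b v) ∧ (∀ v ∈ C, i v = c v)), p i

/-- Conditional independence `X_A ⫫ X_B | X_C` under `p`. -/
def CondIndep (p : (V → Bool) → ℝ) (A B C : Finset V) : Prop :=
  ∀ a b c : V → Bool,
    Pr3 p A B C a b c * Pr p C c = Pr2 p A C a c * Pr2 p B C b c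

/-- `A` and `B` are separated by `D` in `G`: every walk from `A` to `B` meets `D`. -/
def Separated (G : SimpleGraph V) (A B D : Finset V) : Prop :=
  ∀ a ∈ A, ∀ b ∈ B, ∀ W : G.Walk a b, ∃ x ∈ W.support, x ∈ D

/-- The global Markov property for the bi-directed graph `G`. -/
def GMP (G : SimpleGraph V) [DecidableRel G.Adj] (p : (V → Bool) → ℝ) : Prop :=
  ∀ A B C : Finset V, Disjoint A B → Disjoint A C → Disjoint B C →
    Separated G A B (Finset.univ \ (A ∪ B ∪ C)) → CondIndep p A B C


/-- representatives of patterns on `W` -/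
def reps (W : Finset V) : Finset (V → Bool) :=
  Finset.univ.filter (fun t => ∀ v, v ∉ W → t v = false)

lemma Pr_congr (p : (V → Bool) → ℝ) {S : Finset V} {x y : V → Bool}
    (h : ∀ v ∈ S, x v = y v) : Pr p S x = Pr p S y := by
  unfold Pr
  apply Finset.sum_congr _ (fun _ _ => rfl)
  apply Finset.filter_congr
  intro i _
  constructor
  · intro hi v hv; rw [hi v hv, h v hv]
  · intro hi v hv; rw [hi v hv, ← h v hv]

lemma Pr_empty (p : (V → Bool) → ℝ) (hp : IsDist p) (x : V → Bool) :
    Pr p (∅ : Finset V) x = 1 := by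
  unfold Pr
  rw [Finset.filter_true_of_mem (fun i _ => by simp)]
  exact hp.2

lemma Pr_nonneg (p : (V → Bool) → ℝ) (hp : ∀ i, 0 ≤ p i) (S : Finset V) (x : V → Bool) :
    0 ≤ Pr p S x :=
  Finset.sum_nonneg (fun i _ => hp i)

lemma Pr_mono (p : (V → Bool) → ℝ) (hp : ∀ i, 0 ≤ p i) {S T : Finset V}
    (hST : S ⊆ T) (x : V → Bool) : Pr p T x ≤ Pr p S x := by
  apply Finset.sum_le_sum_of_subset_of_nonneg
  · intro i hi
    simp only [Finset.mem_filter, Finset.mem_univ, true_and] at hi ⊢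
    exact fun v hv => hi v (hST hv)
  · intro i _ _; exact hp i

/-- Marginalization. -/
lemma Pr_marg (p : (V → Bool) → ℝ) {S W : Finset V} (h : Disjoint S W) (x : V → Bool) :
    Pr p S x = ∑ t ∈ reps W, Pr p (S ∪ W) (W.piecewise t x) := by
  unfold Pr
  rw [eq_comm]
  have hmap : ∀ i : V → Bool, i ∈ Finset.univ.filter (fun i => ∀ v ∈ S, i v = x v) →
      (fun v => if v ∈ W then i v else false) ∈ reps W := by
    intro i _
    simp only [reps, Finset.mem_filter, Finset.mem_univ, true_and]
    intro v hv; simp [hv]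
  rw [← Finset.sum_fiberwise_of_maps_to hmap p]
  apply Finset.sum_congr rfl
  intro t ht
  apply Finset.sum_congr _ (fun _ _ => rfl)
  rw [Finset.filter_filter]
  apply Finset.filter_congr
  intro i _
  simp only [reps, Finset.mem_filter, Finset.mem_univ, true_and] at ht
  simp only [Finset.mem_union]
  constructor
  · intro hi
    have hiW : ∀ v ∈ W, i v = t v := by
      intro v hv
      rw [hi v (Or.inr hv), Finset.piecewise_eq_of_mem _ _ _ hv]
    have hiS : ∀ v ∈ S, i v = x v := by
      intro v hv
      rw [hi v (Or.inl hv),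
        Finset.piecewise_eq_of_notMem _ _ _ (Finset.disjoint_left.mp h hv)]
    refine ⟨hiS, funext fun v => ?_⟩
    by_cases hv : v ∈ W
    · simp [hv, hiW v hv]
    · simp [hv, (ht v hv).symm]
  · rintro ⟨hiS, hgi⟩ v hv
    rcases hv with hv | hv
    · rw [Finset.piecewise_eq_of_notMem _ _ _ (Finset.disjoint_left.mp h hv)]
      exact hiS v hv
    · rw [Finset.piecewise_eq_of_mem _ _ _ hv]
      have := congrFun hgi v
      simp only [hv, if_pos] at this
      exact this

lemma Pr_piece (p : (V → Bool) → ℝ) {S W : Finset V} (h : Disjoint S W)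
    (t x : V → Bool) : Pr p S (W.piecewise t x) = Pr p S x :=
  Pr_congr p (fun v hv =>
    Finset.piecewise_eq_of_notMem _ _ _ (Finset.disjoint_left.mp h hv))


/-- marginal independence, single-assignment form -/
def mIndep (p : (V → Bool) → ℝ) (X Y : Finset V) : Prop :=
  ∀ x, Pr p (X ∪ Y) x = Pr p X x * Pr p Y x

/-- conditional independence, single-assignment form -/
def CI (p : (V → Bool) → ℝ) (X Y Z : Finset V) : Prop :=
  ∀ x, Pr p (X ∪ Y ∪ Z) x * Pr p Z x = Pr p (X ∪ Z) x * Pr p (Y ∪ Z) x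

lemma mIndep_symm {p : (V → Bool) → ℝ} {X Y : Finset V}
    (h : mIndep p X Y) : mIndep p Y X := by
  intro x
  rw [Finset.union_comm, h x, mul_comm]

lemma CI_symm {p : (V → Bool) → ℝ} {X Y Z : Finset V}
    (h : CI p X Y Z) : CI p Y X Z := by
  intro x
  rw [show Y ∪ X ∪ Z = X ∪ Y ∪ Z by rw [Finset.union_comm Y X], h x, mul_comm]

lemma mDecomp {p : (V → Bool) → ℝ} {X Y W : Finset V}
    (hXW : Disjoint X W) (hYW : Disjoint Y W)
    (h : mIndep p X (Y ∪ W)) : mIndep p X Y := by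
  intro x
  have e1 : Pr p (X ∪ Y) x = ∑ t ∈ reps W, Pr p (X ∪ Y ∪ W) (W.piecewise t x) := by
    rw [Pr_marg p (Finset.disjoint_union_left.mpr ⟨hXW, hYW⟩) x, Finset.union_assoc]
  have e2 : Pr p Y x = ∑ t ∈ reps W, Pr p (Y ∪ W) (W.piecewise t x) := Pr_marg p hYW x
  rw [e1, e2, Finset.mul_sum]
  apply Finset.sum_congr rfl
  intro t _
  have := h (W.piecewise t x)
  rw [← Finset.union_assoc] at this
  rw [this, Pr_piece p hXW]

lemma mIndep_mono {p : (V → Bool) → ℝ} {X S T : Finset V}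
    (hXT : Disjoint X T) (hST : S ⊆ T) (h : mIndep p X T) : mIndep p X S := by
  have h2 : mIndep p X (S ∪ (T \ S)) := by
    rwa [Finset.union_sdiff_of_subset hST]
  exact mDecomp (hXT.mono_right (Finset.sdiff_subset.trans (le_refl T)))
    Finset.sdiff_disjoint.symm h2

/-- marginal weak union -/
lemma mCI {p : (V → Bool) → ℝ} {X Y W : Finset V}
    (hXY : Disjoint X Y) (hXW : Disjoint X W) (hYW : Disjoint Y W)
    (h : mIndep p X (Y ∪ W)) : CI p X Y W := by
  intro x
  have hW : mIndep p X W := by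
    apply mDecomp hXY hYW.symm
    rwa [Finset.union_comm]
  have hx := h x
  rw [← Finset.union_assoc] at hx
  rw [hx, hW x]
  ring

lemma CI_decomp {p : (V → Bool) → ℝ} {X Y W Z : Finset V}
    (hd : Disjoint (X ∪ Y ∪ Z) W)
    (h : CI p X (Y ∪ W) Z) : CI p X Y Z := by
  intro x
  have hXW : Disjoint X W := hd.mono_left (by intro v hv; simp [Finset.mem_union]; tauto)
  have hYW : Disjoint Y W := hd.mono_left (by intro v hv; simp [Finset.mem_union]; tauto)
  have hZW : Disjoint Z W := hd.mono_left (by intro v hv; simp [Finset.mem_union]; tauto)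
  have e1 : Pr p (X ∪ Y ∪ Z) x
      = ∑ t ∈ reps W, Pr p ((X ∪ Y ∪ Z) ∪ W) (W.piecewise t x) := Pr_marg p hd x
  have e2 : Pr p (Y ∪ Z) x
      = ∑ t ∈ reps W, Pr p ((Y ∪ Z) ∪ W) (W.piecewise t x) :=
    Pr_marg p (Finset.disjoint_union_left.mpr ⟨hYW, hZW⟩) x
  rw [e1, e2, Finset.sum_mul, Finset.mul_sum]
  apply Finset.sum_congr rfl
  intro t _
  have hx := h (W.piecewise t x)
  rw [show X ∪ (Y ∪ W) ∪ Z = (X ∪ Y ∪ Z) ∪ W from by ext v; simp [Finset.mem_union]; tauto,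
      show Y ∪ W ∪ Z = (Y ∪ Z) ∪ W from by ext v; simp [Finset.mem_union]; tauto] at hx
  rw [Pr_piece p hZW, Pr_piece p (Finset.disjoint_union_left.mpr ⟨hXW, hZW⟩)] at hx
  exact hx


lemma mContraction {p : (V → Bool) → ℝ} (hp : ∀ i, 0 ≤ p i) {X Y W : Finset V}
    (h1 : mIndep p X Y) (h2 : CI p X W Y) : mIndep p X (Y ∪ W) := by
  intro x
  have hx2 := h2 x
  rw [show X ∪ W ∪ Y = X ∪ (Y ∪ W) from by ext v; simp [Finset.mem_union]; tauto,
    show W ∪ Y = Y ∪ W from Finset.union_comm W Y, h1 x] at hx2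
  by_cases hz : Pr p Y x = 0
  · have hYW : Pr p (Y ∪ W) x = 0 :=
      le_antisymm (hz ▸ Pr_mono p hp Finset.subset_union_left x) (Pr_nonneg p hp _ x)
    have hXYW : Pr p (X ∪ (Y ∪ W)) x = 0 :=
      le_antisymm (hYW ▸ Pr_mono p hp Finset.subset_union_right x) (Pr_nonneg p hp _ x)
    rw [hXYW, hYW]; ring
  · apply mul_right_cancel₀ hz
    linear_combination hx2

lemma CI_weakUnion {p : (V → Bool) → ℝ} (hp : ∀ i, 0 ≤ p i) {X Y W Z : Finset V}
    (hd : Disjoint (X ∪ W ∪ Z) Y) (h : CI p X (Y ∪ W) Z) : CI p X Y (Z ∪ W) := by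
  have hXWZ : CI p X W Z := by
    apply CI_decomp (W := Y) hd
    intro x
    have hx := h x
    rw [show X ∪ (Y ∪ W) ∪ Z = X ∪ (W ∪ Y) ∪ Z from by rw [Finset.union_comm Y W],
      show Y ∪ W ∪ Z = W ∪ Y ∪ Z from by rw [Finset.union_comm Y W]] at hx
    exact hx
  intro x
  have h1 := h x
  have h2 := hXWZ x
  rw [show X ∪ (Y ∪ W) ∪ Z = X ∪ Y ∪ (Z ∪ W) from by ext v; simp [Finset.mem_union]; tauto,
    show (Y ∪ W) ∪ Z = Y ∪ (Z ∪ W) from by ext v; simp [Finset.mem_union]; tauto] at h1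
  rw [show X ∪ W ∪ Z = X ∪ (Z ∪ W) from by ext v; simp [Finset.mem_union]; tauto,
    show W ∪ Z = Z ∪ W from Finset.union_comm W Z] at h2
  by_cases hz : Pr p Z x = 0
  · have hZW : Pr p (Z ∪ W) x = 0 :=
      le_antisymm (hz ▸ Pr_mono p hp Finset.subset_union_left x) (Pr_nonneg p hp _ x)
    have hXZW : Pr p (X ∪ (Z ∪ W)) x = 0 :=
      le_antisymm (hZW ▸ Pr_mono p hp Finset.subset_union_right x) (Pr_nonneg p hp _ x)
    rw [hZW, hXZW]; ring
  · apply mul_left_cancel₀ hz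
    linear_combination Pr p (Z ∪ W) x * h1 - Pr p (Y ∪ (Z ∪ W)) x * h2

lemma Pr2_eq_Pr (p : (V → Bool) → ℝ) {S T : Finset V} {a b x : V → Bool}
    (h1 : ∀ v ∈ S, x v = a v) (h2 : ∀ v ∈ T, x v = b v) :
    Pr2 p S T a b = Pr p (S ∪ T) x := by
  unfold Pr2 Pr
  apply Finset.sum_congr _ (fun _ _ => rfl)
  apply Finset.filter_congr
  intro i _
  simp only [Finset.mem_union]
  constructor
  · rintro ⟨hS, hT⟩ v hv
    rcases hv with hv | hv
    · rw [hS v hv, h1 v hv]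
    · rw [hT v hv, h2 v hv]
  · intro h
    exact ⟨fun v hv => by rw [h v (Or.inl hv), h1 v hv],
           fun v hv => by rw [h v (Or.inr hv), h2 v hv]⟩

lemma Pr3_eq_Pr (p : (V → Bool) → ℝ) {A B C : Finset V} {a b c x : V → Bool}
    (h1 : ∀ v ∈ A, x v = a v) (h2 : ∀ v ∈ B, x v = b v) (h3 : ∀ v ∈ C, x v = c v) :
    Pr3 p A B C a b c = Pr p (A ∪ B ∪ C) x := by
  unfold Pr3 Pr
  apply Finset.sum_congr _ (fun _ _ => rfl)
  apply Finset.filter_congr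
  intro i _
  simp only [Finset.mem_union]
  constructor
  · rintro ⟨hA, hB, hC⟩ v hv
    rcases hv with (hv | hv) | hv
    · rw [hA v hv, h1 v hv]
    · rw [hB v hv, h2 v hv]
    · rw [hC v hv, h3 v hv]
  · intro h
    exact ⟨fun v hv => by rw [h v (Or.inl (Or.inl hv)), h1 v hv],
           fun v hv => by rw [h v (Or.inl (Or.inr hv)), h2 v hv],
           fun v hv => by rw [h v (Or.inr hv), h3 v hv]⟩

lemma mIndep_of_Indep {p : (V → Bool) → ℝ} {S T : Finset V}
    (h : Indep p S T) : mIndep p S T := by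
  intro x
  rw [← Pr2_eq_Pr p (fun v _ => rfl) (fun v _ => rfl), h x x]

lemma Indep_of_mIndep {p : (V → Bool) → ℝ} {S T : Finset V}
    (hd : Disjoint S T) (h : mIndep p S T) : Indep p S T := by
  intro a b
  set x := S.piecewise a b with hx
  have h1 : ∀ v ∈ S, x v = a v := fun v hv => Finset.piecewise_eq_of_mem _ _ _ hv
  have h2 : ∀ v ∈ T, x v = b v := fun v hv =>
    Finset.piecewise_eq_of_notMem _ _ _ (Finset.disjoint_right.mp hd hv)
  rw [Pr2_eq_Pr p h1 h2, h x, Pr_congr p h1, Pr_congr p h2]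

lemma CondIndep_of_CI {p : (V → Bool) → ℝ} {A B C : Finset V}
    (hAB : Disjoint A B) (hAC : Disjoint A C) (hBC : Disjoint B C)
    (h : CI p A B C) : CondIndep p A B C := by
  intro a b c
  set x := A.piecewise a (B.piecewise b c) with hx
  have h1 : ∀ v ∈ A, x v = a v := fun v hv => Finset.piecewise_eq_of_mem _ _ _ hv
  have h2 : ∀ v ∈ B, x v = b v := by
    intro v hv
    rw [hx, Finset.piecewise_eq_of_notMem _ _ _ (Finset.disjoint_right.mp hAB hv),
      Finset.piecewise_eq_of_mem _ _ _ hv]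
  have h3 : ∀ v ∈ C, x v = c v := by
    intro v hv
    rw [hx, Finset.piecewise_eq_of_notMem _ _ _ (Finset.disjoint_right.mp hAC hv),
      Finset.piecewise_eq_of_notMem _ _ _ (Finset.disjoint_right.mp hBC hv)]
  rw [Pr3_eq_Pr p h1 h2 h3, ← Pr_congr p h3, Pr2_eq_Pr p h1 h3, Pr2_eq_Pr p h2 h3]
  exact h x

lemma CI_of_CondIndep {p : (V → Bool) → ℝ} {A B C : Finset V}
    (h : CondIndep p A B C) : CI p A B C := by
  intro x
  have := h x x x
  rw [Pr3_eq_Pr p (fun v _ => rfl) (fun v _ => rfl) (fun v _ => rfl),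
    Pr2_eq_Pr p (x := x) (fun v _ => rfl) (fun v _ => rfl),
    Pr2_eq_Pr p (x := x) (fun v _ => rfl) (fun v _ => rfl)] at this
  exact this

lemma mIndep_of_CI_empty {p : (V → Bool) → ℝ} (hp : IsDist p) {S T : Finset V}
    (h : CI p S T ∅) : mIndep p S T := by
  intro x
  have := h x
  rwa [Finset.union_empty, Finset.union_empty, Finset.union_empty, Pr_empty p hp, mul_one] at this

lemma CI_empty_of_mIndep {p : (V → Bool) → ℝ} (hp : IsDist p) {S T : Finset V}
    (h : mIndep p S T) : CI p S T ∅ := by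
  intro x
  rw [Finset.union_empty, Finset.union_empty, Finset.union_empty, Pr_empty p hp, mul_one]
  exact h x

lemma mem_spo {G : SimpleGraph V} [DecidableRel G.Adj] {A : Finset V} {w : V} :
    w ∈ spo G A ↔ w ∈ A ∨ ∃ v ∈ A, G.Adj v w := by
  simp [spo]

/-- Walking from inside `C` to outside `C`, some vertex is outside `C` but adjacent to `C`. -/
lemma exit_lemma {G : SimpleGraph V} {C : Finset V} :
    ∀ {a b : V} (W : G.Walk a b), a ∈ C → b ∉ C →
      ∃ x ∈ W.support, x ∉ C ∧ ∃ u ∈ C, G.Adj u x := by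
  intro a b W
  induction W with
  | nil => intro h1 h2; exact absurd h1 h2
  | @cons u v w h q ih =>
    intro h1 h2
    by_cases hv : v ∈ C
    · obtain ⟨x, hx1, hx2⟩ := ih hv h2
      refine ⟨x, ?_, hx2⟩
      rw [SimpleGraph.Walk.support_cons, List.mem_cons]
      exact Or.inr hx1
    · refine ⟨v, ?_, hv, u, h1, h⟩
      rw [SimpleGraph.Walk.support_cons, List.mem_cons]
      exact Or.inr q.start_mem_support

/-- Lemma 1: if `A` and `B` are disjoint with no edges between them, they are independent. -/
lemma lemma1 {G : SimpleGraph V} [DecidableRel G.Adj] {p : (V → Bool) → ℝ}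
    (hp : IsDist p) (hcs : CSMP G p) :
    ∀ (n : ℕ) (A B : Finset V), A.card ≤ n → Disjoint A B →
      (∀ a ∈ A, ∀ b ∈ B, ¬ G.Adj a b) → mIndep p A B := by
  intro n
  induction n with
  | zero =>
    intro A B hcard _ _
    rw [Nat.le_zero, Finset.card_eq_zero] at hcard
    subst hcard
    intro x
    rw [Finset.empty_union, Pr_empty p hp, one_mul]
  | succ n ih =>
    intro A B hcard hd hne
    rcases A.eq_empty_or_nonempty with rfl | ⟨a, ha⟩
    · intro x
      rw [Finset.empty_union, Pr_empty p hp, one_mul]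
    · classical
      set K := A.filter (fun v => ∃ W : G.Walk a v, ∀ x ∈ W.support, x ∈ A) with hKdef
      have hKA : K ⊆ A := Finset.filter_subset _ _
      have haK : a ∈ K := by
        rw [hKdef, Finset.mem_filter]
        exact ⟨ha, SimpleGraph.Walk.nil, by intro x hx; simp at hx; subst hx; exact ha⟩
      -- membership in K gives a walk inside A
      have hKwalk : ∀ v ∈ K, ∃ W : G.Walk a v, ∀ x ∈ W.support, x ∈ A := by
        intro v hv; rw [hKdef, Finset.mem_filter] at hv; exact hv.2
      -- every vertex on a walk inside A from a lies in K
      have hKabs : ∀ {v : V} (W : G.Walk a v), (∀ x ∈ W.support, x ∈ A) →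
          ∀ x ∈ W.support, x ∈ K := by
        intro v W hWA x hx
        rw [hKdef, Finset.mem_filter]
        refine ⟨hWA x hx, W.takeUntil x hx, ?_⟩
        intro y hy
        exact hWA y (SimpleGraph.Walk.support_takeUntil_subset W hx hy)
      -- K is closed under adjacency within A
      have hclose : ∀ v ∈ K, ∀ u, G.Adj v u → u ∈ A → u ∈ K := by
        intro v hv u hadj hu
        obtain ⟨W, hW⟩ := hKwalk v hv
        rw [hKdef, Finset.mem_filter]
        refine ⟨hu, W.concat hadj, ?_⟩
        intro x hx
        rw [SimpleGraph.Walk.support_concat, List.mem_append] at hx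
        rcases hx with hx | hx
        · exact hW x hx
        · simp at hx; subst hx; exact hu
      have hconn : Conn G K := by
        intro v hv w hw
        obtain ⟨Wv, hWv⟩ := hKwalk v hv
        obtain ⟨Ww, hWw⟩ := hKwalk w hw
        refine ⟨Wv.reverse.append Ww, ?_⟩
        intro x hx
        rw [SimpleGraph.Walk.support_append, List.mem_append] at hx
        rcases hx with hx | hx
        · rw [SimpleGraph.Walk.support_reverse, List.mem_reverse] at hx
          exact hKabs Wv hWv x hx
        · exact hKabs Ww hWw x (List.mem_of_mem_tail hx)
      -- (A \ K) ∪ B avoids spo K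
      have hspo : ∀ u ∈ (A \ K) ∪ B, u ∈ Finset.univ \ spo G K := by
        intro u hu
        rw [Finset.mem_sdiff]
        refine ⟨Finset.mem_univ u, ?_⟩
        rw [mem_spo]
        rw [Finset.mem_union, Finset.mem_sdiff] at hu
        rintro (huK | ⟨v, hvK, hadj⟩)
        · rcases hu with ⟨_, hnK⟩ | huB
          · exact hnK huK
          · exact Finset.disjoint_left.mp hd (hKA huK) huB
        · rcases hu with ⟨huA, hnK⟩ | huB
          · exact hnK (hclose v hvK u hadj huA)
          · exact hne v (hKA hvK) u huB hadj
      have hKdisj : Disjoint K (Finset.univ \ spo G K) := by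
        rw [Finset.disjoint_left]
        intro v hv hv2
        rw [Finset.mem_sdiff, mem_spo] at hv2
        exact hv2.2 (Or.inl hv)
      have hK1 : mIndep p K ((A \ K) ∪ B) :=
        mIndep_mono hKdisj hspo (mIndep_of_Indep (hcs K ⟨a, haK⟩ hconn))
      have hdAKB : Disjoint (A \ K) B := hd.mono_left (Finset.sdiff_subset)
      have hIH : mIndep p (A \ K) B := by
        apply ih (A \ K) B _ hdAKB
        · intro u hu v hv
          exact hne u (Finset.mem_sdiff.mp hu).1 v hv
        · have hlt : (A \ K).card < A.card :=
            Finset.card_lt_card (Finset.sdiff_ssubset hKA ⟨a, haK⟩)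
          omega
      have hCI : CI p B K (A \ K) := by
        apply CI_symm
        apply mCI (Finset.disjoint_left.mpr (fun v hv hvB =>
            Finset.disjoint_left.mp hd (hKA hv) hvB))
          Finset.disjoint_sdiff (hdAKB.symm)
        rwa [Finset.union_comm]
      have hfin : mIndep p B ((A \ K) ∪ K) := mContraction hp.1 (mIndep_symm hIH) hCI
      rw [Finset.sdiff_union_of_subset hKA] at hfin
      exact mIndep_symm hfin

/-- A binary distribution satisfies the global Markov property for `G` iff it
satisfies the connected set Markov property for `G`. -/
theorem stmt6 (G : SimpleGraph V) [DecidableRel G.Adj] (p : (V → Bool) → ℝ)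
    (hp : IsDist p) : GMP G p ↔ CSMP G p := by
  constructor
  · -- GMP → CSMP
    intro hg C hCne hCconn
    set B := Finset.univ \ spo G C with hBdef
    have hCB : Disjoint C B := by
      rw [Finset.disjoint_left]
      intro v hv hvB
      rw [hBdef, Finset.mem_sdiff, mem_spo] at hvB
      exact hvB.2 (Or.inl hv)
    have hsep : Separated G C B (Finset.univ \ (C ∪ B ∪ ∅)) := by
      intro a ha b hb W
      have hbC : b ∉ C := Finset.disjoint_left.mp hCB.symm hb
      obtain ⟨x, hxs, hxC, u, huC, hadj⟩ := exit_lemma W ha hbC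
      refine ⟨x, hxs, ?_⟩
      rw [Finset.mem_sdiff, Finset.union_empty, Finset.mem_union]
      refine ⟨Finset.mem_univ x, ?_⟩
      rintro (hx | hx)
      · exact hxC hx
      · rw [hBdef, Finset.mem_sdiff, mem_spo] at hx
        exact hx.2 (Or.inr ⟨u, huC, hadj⟩)
    have hci := hg C B ∅ hCB (Finset.disjoint_empty_right C) (Finset.disjoint_empty_right B) hsep
    exact Indep_of_mIndep hCB (mIndep_of_CI_empty hp (CI_of_CondIndep hci))
  · -- CSMP → GMP
    intro hcs A B C hAB hAC hBC hsep
    classical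
    set S := A ∪ B ∪ C with hSdef
    set Bs := S.filter (fun v => ∃ b ∈ B, ∃ W : G.Walk v b, ∀ x ∈ W.support, x ∈ S)
      with hBsdef
    set As := S \ Bs with hAsdef
    have hBsS : Bs ⊆ S := Finset.filter_subset _ _
    have hBBs : B ⊆ Bs := by
      intro b hb
      rw [hBsdef, Finset.mem_filter]
      have hbS : b ∈ S := by rw [hSdef]; simp [Finset.mem_union, hb]
      exact ⟨hbS, b, hb, SimpleGraph.Walk.nil, by
        intro x hx; simp at hx; subst hx; exact hbS⟩
    have hABs : A ⊆ As := by
      intro v hv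
      rw [hAsdef, Finset.mem_sdiff]
      refine ⟨by rw [hSdef]; simp [Finset.mem_union, hv], ?_⟩
      rw [hBsdef, Finset.mem_filter]
      rintro ⟨-, b, hb, W, hW⟩
      obtain ⟨x, hxs, hxD⟩ := hsep v hv b hb W
      rw [Finset.mem_sdiff] at hxD
      exact hxD.2 (hW x hxs)
    have hnoedge : ∀ u ∈ As, ∀ v ∈ Bs, ¬ G.Adj u v := by
      intro u hu v hv hadj
      rw [hAsdef, Finset.mem_sdiff] at hu
      rw [hBsdef, Finset.mem_filter] at hv
      obtain ⟨hvS, b, hb, W, hW⟩ := hv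
      apply hu.2
      rw [hBsdef, Finset.mem_filter]
      refine ⟨hu.1, b, hb, SimpleGraph.Walk.cons hadj W, ?_⟩
      intro x hx
      rw [SimpleGraph.Walk.support_cons, List.mem_cons] at hx
      rcases hx with rfl | hx
      · exact hu.1
      · exact hW x hx
    have hdisjAsBs : Disjoint As Bs := Finset.sdiff_disjoint
    have hm : mIndep p As Bs := lemma1 hp hcs As.card As Bs le_rfl hdisjAsBs hnoedge
    set A' := As \ A with hA'def
    set B' := Bs \ B with hB'def
    have hAs : A ∪ A' = As := Finset.union_sdiff_of_subset hABs
    have hBs : B ∪ B' = Bs := Finset.union_sdiff_of_subset hBBs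
    have hm2 : mIndep p (A ∪ A') (B ∪ B') := by rwa [hAs, hBs]
    -- pairwise disjointness
    have dA'Bs : Disjoint A' Bs := hdisjAsBs.mono_left Finset.sdiff_subset
    have dAA' : Disjoint A A' := Finset.disjoint_sdiff
    have dBB' : Disjoint B B' := Finset.disjoint_sdiff
    have dAB' : Disjoint A B' :=
      (hdisjAsBs.mono_left (show A ≤ As from hABs)).mono_right Finset.sdiff_subset
    have dA'B : Disjoint A' B := dA'Bs.mono_right hBBs
    have dA'B' : Disjoint A' B' := dA'Bs.mono_right Finset.sdiff_subset
    have step1 : CI p (A ∪ A') B B' := by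
      apply mCI ?h1 ?h2 dBB' hm2
      · exact Finset.disjoint_union_left.mpr ⟨hAB, dA'B⟩
      · exact Finset.disjoint_union_left.mpr ⟨dAB', dA'B'⟩
    have step2 : CI p B (A ∪ A') B' := CI_symm step1
    have step25 : CI p B (A ∪ A') B' := step2
    have step3 : CI p B A (B' ∪ A') := by
      apply CI_weakUnion hp.1 ?hd step2
      exact Finset.disjoint_union_left.mpr
        ⟨Finset.disjoint_union_left.mpr ⟨hAB.symm, dAA'.symm⟩, dAB'.symm⟩
    have step4 : CI p A B (B' ∪ A') := CI_symm step3
    have hCeq : B' ∪ A' = C := by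
      ext v
      constructor
      · intro hv
        rw [Finset.mem_union] at hv
        have hvS : v ∈ S := by
          rcases hv with hv | hv
          · exact hBsS (Finset.sdiff_subset (hB'def ▸ hv))
          · exact Finset.sdiff_subset (Finset.sdiff_subset (hA'def ▸ hv))
        have hvA : v ∉ A := by
          rcases hv with hv | hv
          · intro hvA
            exact Finset.disjoint_left.mp hdisjAsBs (hABs hvA)
              (Finset.sdiff_subset (hB'def ▸ hv))
          · exact ((hA'def ▸ hv) |> Finset.mem_sdiff.mp).2
        have hvB : v ∉ B := by
          rcases hv with hv | hv
          · exact ((hB'def ▸ hv) |> Finset.mem_sdiff.mp).2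
          · intro hvB
            exact Finset.disjoint_left.mp hdisjAsBs
              (Finset.sdiff_subset (hA'def ▸ hv)) (hBBs hvB)
        rw [hSdef, Finset.mem_union, Finset.mem_union] at hvS
        rcases hvS with (h | h) | h
        · exact absurd h hvA
        · exact absurd h hvB
        · exact h
      · intro hv
        have hvS : v ∈ S := by rw [hSdef]; simp [Finset.mem_union, hv]
        have hvA : v ∉ A := fun h => Finset.disjoint_left.mp hAC h hv
        have hvB : v ∉ B := fun h => Finset.disjoint_left.mp hBC h hv
        rw [Finset.mem_union]
        by_cases hvBs : v ∈ Bs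
        · exact Or.inl (by rw [hB'def, Finset.mem_sdiff]; exact ⟨hvBs, hvB⟩)
        · refine Or.inr ?_
          rw [hA'def, Finset.mem_sdiff, hAsdef, Finset.mem_sdiff]
          exact ⟨⟨hvS, hvBs⟩, hvA⟩
    rw [hCeq] at step4
    exact CondIndep_of_CI hAB hAC hBC step4


end BMMI
end

section
/- Let G = (V,E) be a finite bi-directed graph, let p be a binary distribution on V satisfying the connected set Markov property for G, let D ⊆ V be a disconnected set, let v ∈ D, and let C be the inclusion-maximal connected subset of D containing v. Then the Möbius parameters of p satisfy q_{D∖{v}}(p) = q_{C∖{v}}(p) · q_{D∖C}(p), with the convention q_∅ = 1. -/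
open Finset

namespace BMMI

variable {V : Type*} [Fintype V] [DecidableEq V]

set_option linter.unusedSectionVars false

/-- Key predicate splitting: constraining on `A.erase v` together with a fixed value at `v`
is the same as constraining on `A` with an updated target. -/
lemma pred_split {A : Finset V} {v : V} (hv : v ∈ A) (i a : V → Bool) (c : Bool) :
    ((∀ w ∈ A.erase v, i w = a w) ∧ i v = c) ↔
      (∀ w ∈ A, i w = Function.update a v c w) := by
  constructor
  · rintro ⟨h1, h2⟩ w hw
    by_cases hwv : w = v
    · subst hwv; simp [Function.update, h2]
    · rw [Function.update_of_ne hwv]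
      exact h1 w (Finset.mem_erase.mpr ⟨hwv, hw⟩)
  · intro h1
    refine ⟨fun w hw => ?_, ?_⟩
    · obtain ⟨hwv, hwA⟩ := Finset.mem_erase.mp hw
      have := h1 w hwA
      rwa [Function.update_of_ne hwv] at this
    · have := h1 v hv
      simpa using this

lemma Pr_erase (p : (V → Bool) → ℝ) {A : Finset V} {v : V} (hv : v ∈ A) (a : V → Bool) :
    Pr p (A.erase v) a =
      Pr p A (Function.update a v true) + Pr p A (Function.update a v false) := by
  unfold Pr
  rw [← Finset.sum_filter_add_sum_filter_not
      (Finset.univ.filter (fun i : V → Bool => ∀ w ∈ A.erase v, i w = a w))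
      (fun i => i v = true)]
  rw [Finset.filter_filter, Finset.filter_filter]
  congr 1 <;> apply Finset.sum_congr _ (fun _ _ => rfl) <;>
    apply Finset.filter_congr <;> intro i _
  · simpa using pred_split hv i a true
  · simpa [Bool.not_eq_true] using pred_split hv i a false

lemma Pr2_erase_left (p : (V → Bool) → ℝ) {S : Finset V} (T : Finset V) {v : V}
    (hv : v ∈ S) (a b : V → Bool) :
    Pr2 p (S.erase v) T a b =
      Pr2 p S T (Function.update a v true) b + Pr2 p S T (Function.update a v false) b := by
  unfold Pr2
  rw [← Finset.sum_filter_add_sum_filter_not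
      (Finset.univ.filter
        (fun i : V → Bool => (∀ w ∈ S.erase v, i w = a w) ∧ (∀ w ∈ T, i w = b w)))
      (fun i => i v = true)]
  rw [Finset.filter_filter, Finset.filter_filter]
  congr 1 <;> apply Finset.sum_congr _ (fun _ _ => rfl) <;>
    apply Finset.filter_congr <;> intro i _
  · constructor
    · rintro ⟨⟨h1, h2⟩, h3⟩
      exact ⟨(pred_split hv i a true).mp ⟨h1, h3⟩, h2⟩
    · rintro ⟨h1, h2⟩
      obtain ⟨h3, h4⟩ := (pred_split hv i a true).mpr h1
      exact ⟨⟨h3, h2⟩, h4⟩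
  · constructor
    · rintro ⟨⟨h1, h2⟩, h3⟩
      rw [Bool.not_eq_true] at h3
      exact ⟨(pred_split hv i a false).mp ⟨h1, h3⟩, h2⟩
    · rintro ⟨h1, h2⟩
      obtain ⟨h3, h4⟩ := (pred_split hv i a false).mpr h1
      exact ⟨⟨h3, h2⟩, by simp [h4]⟩

lemma Pr2_erase_right (p : (V → Bool) → ℝ) (S : Finset V) {T : Finset V} {v : V}
    (hv : v ∈ T) (a b : V → Bool) :
    Pr2 p S (T.erase v) a b =
      Pr2 p S T a (Function.update b v true) + Pr2 p S T a (Function.update b v false) := by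
  unfold Pr2
  rw [← Finset.sum_filter_add_sum_filter_not
      (Finset.univ.filter
        (fun i : V → Bool => (∀ w ∈ S, i w = a w) ∧ (∀ w ∈ T.erase v, i w = b w)))
      (fun i => i v = true)]
  rw [Finset.filter_filter, Finset.filter_filter]
  congr 1 <;> apply Finset.sum_congr _ (fun _ _ => rfl) <;>
    apply Finset.filter_congr <;> intro i _
  · constructor
    · rintro ⟨⟨h1, h2⟩, h3⟩
      exact ⟨h1, (pred_split hv i b true).mp ⟨h2, h3⟩⟩
    · rintro ⟨h1, h2⟩
      obtain ⟨h3, h4⟩ := (pred_split hv i b true).mpr h2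
      exact ⟨⟨h1, h3⟩, h4⟩
  · constructor
    · rintro ⟨⟨h1, h2⟩, h3⟩
      rw [Bool.not_eq_true] at h3
      exact ⟨h1, (pred_split hv i b false).mp ⟨h2, h3⟩⟩
    · rintro ⟨h1, h2⟩
      obtain ⟨h3, h4⟩ := (pred_split hv i b false).mpr h2
      exact ⟨⟨h1, h3⟩, by simp [h4]⟩

lemma indep_erase_right {p : (V → Bool) → ℝ} {S T : Finset V}
    (h : Indep p S T) (v : V) : Indep p S (T.erase v) := by
  by_cases hv : v ∈ T
  · intro a b
    rw [Pr2_erase_right p S hv, h a _, h a _, Pr_erase p hv b, mul_add]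
  · rwa [Finset.erase_eq_of_notMem hv]

lemma indep_subset_right {p : (V → Bool) → ℝ} {S T T' : Finset V}
    (h : Indep p S T) (hsub : T' ⊆ T) : Indep p S T' := by
  obtain ⟨n, hn⟩ : ∃ n, (T \ T').card = n := ⟨_, rfl⟩
  induction n generalizing T with
  | zero =>
      have : T \ T' = ∅ := Finset.card_eq_zero.mp hn
      have : T ⊆ T' := by
        intro x hx
        by_contra hx'
        exact (Finset.notMem_empty x) (this ▸ Finset.mem_sdiff.mpr ⟨hx, hx'⟩)
      rw [Finset.Subset.antisymm hsub this]
      exact h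
  | succ n ih =>
      have hne : (T \ T').Nonempty := by
        rw [← Finset.card_pos, hn]; omega
      obtain ⟨w, hw⟩ := hne
      obtain ⟨hwT, hwT'⟩ := Finset.mem_sdiff.mp hw
      refine ih (indep_erase_right h w) ?_ ?_
      · intro x hx
        exact Finset.mem_erase.mpr ⟨fun e => hwT' (e ▸ hx), hsub hx⟩
      · have heq : T.erase w \ T' = (T \ T').erase w := by
          ext x
          simp only [Finset.mem_sdiff, Finset.mem_erase]
          tauto
        rw [heq, Finset.card_erase_of_mem hw, hn]
        omega

lemma Pr_union_eq_Pr2 (p : (V → Bool) → ℝ) (A B : Finset V) (a : V → Bool) :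
    Pr p (A ∪ B) a = Pr2 p A B a a := by
  unfold Pr Pr2
  apply Finset.sum_congr _ (fun _ _ => rfl)
  apply Finset.filter_congr
  intro i _
  simp [Finset.mem_union, or_imp, forall_and]

/-- If `p ∈ B(G)`, `D` is disconnected, `v ∈ D`, and `C` is the inclusion-maximal
connected subset of `D` containing `v`, then
`q_{D∖{v}} = q_{C∖{v}} ⋅ q_{D∖C}` (with `q_∅ = 1`). -/
theorem stmt12 (G : SimpleGraph V) [DecidableRel G.Adj] (p : (V → Bool) → ℝ)
    (hp : IsDist p) (h : CSMP G p) (D C : Finset V) (hD : ¬ Conn G D)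
    (v : V) (hv : v ∈ D) (hC : IsMaxConnComp G D C) (hvC : v ∈ C) :
    qM p (D.erase v) = qM p (C.erase v) * qM p (D \ C) := by
  classical
  obtain ⟨hCD, hCne, hCconn, hCmax⟩ := hC
  -- D \ C avoids spo G C
  have hsub : D \ C ⊆ Finset.univ \ spo G C := by
    intro w hw
    obtain ⟨hwD, hwC⟩ := Finset.mem_sdiff.mp hw
    refine Finset.mem_sdiff.mpr ⟨Finset.mem_univ w, fun hspo => ?_⟩
    rw [spo, Finset.mem_filter] at hspo
    obtain h1 | ⟨u, huC, hadj⟩ := hspo.2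
    · exact hwC h1
    · -- insert w C is connected, contradicting maximality
      have hconn : Conn G (insert w C) := by
        intro x hx y hy
        rcases Finset.mem_insert.mp hx with hxw | hxC <;>
          rcases Finset.mem_insert.mp hy with hyw | hyC
        · subst hxw; subst hyw
          exact ⟨SimpleGraph.Walk.nil, by simp⟩
        · subst hxw
          obtain ⟨W, hW⟩ := hCconn u huC y hyC
          refine ⟨SimpleGraph.Walk.cons hadj.symm W, ?_⟩
          intro x hx
          rw [SimpleGraph.Walk.support_cons, List.mem_cons] at hx
          rcases hx with rfl | hx
          · exact Finset.mem_insert_self _ _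
          · exact Finset.mem_insert_of_mem (hW x hx)
        · subst hyw
          obtain ⟨W, hW⟩ := hCconn u huC x hxC
          refine ⟨(SimpleGraph.Walk.cons hadj.symm W).reverse, ?_⟩
          intro z hz
          rw [SimpleGraph.Walk.support_reverse, List.mem_reverse,
            SimpleGraph.Walk.support_cons, List.mem_cons] at hz
          rcases hz with rfl | hz
          · exact Finset.mem_insert_self _ _
          · exact Finset.mem_insert_of_mem (hW z hz)
        · obtain ⟨W, hW⟩ := hCconn x hxC y hyC
          exact ⟨W, fun z hz => Finset.mem_insert_of_mem (hW z hz)⟩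
      have heq := hCmax (insert w C) (Finset.subset_insert _ _)
        (Finset.insert_subset hwD hCD) hconn
      exact hwC (heq ▸ Finset.mem_insert_self w C)
  have hindep : Indep p C (D \ C) :=
    indep_subset_right (h C ⟨v, hvC⟩ hCconn) hsub
  have hset : D.erase v = (C.erase v) ∪ (D \ C) := by
    ext w
    rw [Finset.mem_erase, Finset.mem_union, Finset.mem_erase, Finset.mem_sdiff]
    constructor
    · rintro ⟨hne, hwD⟩
      by_cases hwC : w ∈ C
      · exact Or.inl ⟨hne, hwC⟩
      · exact Or.inr ⟨hwD, hwC⟩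
    · rintro (⟨hne, hwC⟩ | ⟨hwD, hwC⟩)
      · exact ⟨hne, hCD hwC⟩
      · exact ⟨fun e => hwC (e ▸ hvC), hwD⟩
  have h0 : Function.update (fun _ : V => false) v false = (fun _ : V => false) := by
    funext w; by_cases hw : w = v <;> simp [Function.update, hw]
  unfold qM
  rw [hset, Pr_union_eq_Pr2, Pr2_erase_left p _ hvC, hindep _ _, hindep _ _,
    Pr_erase p hvC, h0, add_mul]

end BMMI
end
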